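/- Let g ≥ 1, k > g. Define for j = 1,…,g the finite sequence o(j) consisting of the numbers {2i : 0 ≤ i ≤ k} ∪ {2i + 2j − 1 : 0 ≤ i ≤ k−g−1} listed in strictly increasing order (vanishing orders at 0), and the sequence o'(j) consisting of {2k − 2i : 0 ≤ i ≤ k} ∪ {2k − 2i − 2j − 1 : 0 ≤ i ≤ k−g−1} listed in strictly increasing order (vanishing orders at ∞). Then for every j with 1 ≤ j ≤ g−1 and every index i with 0 ≤ i ≤ 2k−g, one has o'(j)_i + o(j+1)_{2k−g−i} = 2k. -/

import Mathlib

/-- Vanishing orders of `H_j` at the point `0`, in strictly increasing order. -/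
def ordSeqZero (k g j : ℕ) : List ℕ :=
  Finset.sort
    ((Finset.range (k+1)).image (fun i => 2*i) ∪
      (Finset.range (k-g)).image (fun i => 2*i + 2*j - 1)) (· ≤ ·)

/-- Vanishing orders of `H_j` at the point `∞`, in strictly increasing order. -/
def ordSeqInf (k g j : ℕ) : List ℕ :=
  Finset.sort
    ((Finset.range (k+1)).image (fun i => 2*k - 2*i) ∪
      (Finset.range (k-g)).image (fun i => 2*k - 2*i - (2*j + 1))) (· ≤ ·)

/-- Explicit closed form for the sorted union of `{2i : i ≤ k}` and
`{2(a+i)+1 : i < c}`. -/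
def Fform (a c k m : ℕ) : ℕ :=
  if m ≤ a then 2*m else if m < a + 2*c + 1 then m + a else 2*(m - c)

lemma Fform_strictMono (a c k : ℕ) (hac : a + c ≤ k) : StrictMono (Fform a c k) := by
  apply strictMono_nat_of_lt_succ
  intro n
  unfold Fform
  split_ifs <;> omega

lemma key (k a c : ℕ) (hac : a + c ≤ k) :
    Finset.sort
      ((Finset.range (k+1)).image (fun i => 2*i) ∪
        (Finset.range c).image (fun i => 2*(a+i)+1)) (· ≤ ·) =
    (List.range (k+c+1)).map (Fform a c k) := by
  have hmono := Fform_strictMono a c k hac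
  set L := (List.range (k+c+1)).map (Fform a c k) with hL
  have hsorted : L.Pairwise (· < ·) := by
    rw [hL, List.pairwise_map]
    exact (List.pairwise_lt_range (n := k+c+1)).imp (fun h => hmono h)
  have hnodup : L.Nodup := hsorted.imp (fun h => ne_of_lt h)
  have htf : L.toFinset =
      (Finset.range (k+1)).image (fun i => 2*i) ∪
        (Finset.range c).image (fun i => 2*(a+i)+1) := by
    ext x
    simp only [hL, List.mem_toFinset, List.mem_map, List.mem_range, Finset.mem_union,
      Finset.mem_image, Finset.mem_range]
    constructor
    · rintro ⟨m, hm, rfl⟩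
      unfold Fform
      split_ifs with h1 h2
      · exact Or.inl ⟨m, by omega, rfl⟩
      · rcases Nat.even_or_odd (m + a) with ⟨t, ht⟩ | ⟨t, ht⟩
        · exact Or.inl ⟨t, by omega, by omega⟩
        · exact Or.inr ⟨t - a, by omega, by omega⟩
      · exact Or.inl ⟨m - c, by omega, by omega⟩
    · rintro (⟨i, hi, rfl⟩ | ⟨i, hi, rfl⟩)
      · refine ⟨if i ≤ a then i else if i ≤ a + c then 2*i - a else i + c, ?_, ?_⟩
        · split_ifs <;> omega
        · unfold Fform; split_ifs <;> omega
      · refine ⟨a + 1 + 2*i, by omega, ?_⟩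
        unfold Fform; split_ifs <;> omega
  rw [← htf]
  exact (List.toFinset_sort _ hnodup).mpr (hsorted.imp (fun h => le_of_lt h))

lemma getD_map_range (f : ℕ → ℕ) (n i : ℕ) (hi : i < n) :
    ((List.range n).map f).getD i 0 = f i := by
  rw [List.getD_eq_getElem _ _ (by simpa using hi)]
  simp

theorem stmt_7 (g k j : ℕ) (hg : 1 ≤ g) (hk : g < k) (hj1 : 1 ≤ j) (hjg : j ≤ g - 1) :
    ∀ i : ℕ, i ≤ 2*k - g →
      (ordSeqInf k g j).getD i 0 + (ordSeqZero k g (j+1)).getD (2*k - g - i) 0 = 2*k := by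
  have hZero : ordSeqZero k g (j+1) = (List.range (2*k-g+1)).map (Fform j (k-g) k) := by
    unfold ordSeqZero
    have h1 : (fun i => 2*i + 2*(j+1) - 1) = (fun i => 2*(j+i)+1) := by
      funext i; omega
    rw [h1, key k j (k-g) (by omega)]
    have : k + (k-g) + 1 = 2*k - g + 1 := by omega
    rw [this]
  have hInf : ordSeqInf k g j = (List.range (2*k-g+1)).map (Fform (g-j) (k-g) k) := by
    unfold ordSeqInf
    have h1 : (Finset.range (k+1)).image (fun i => 2*k - 2*i) =
        (Finset.range (k+1)).image (fun i => 2*i) := by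
      ext x
      simp only [Finset.mem_image, Finset.mem_range]
      constructor
      · rintro ⟨i, hi, rfl⟩; exact ⟨k - i, by omega, by omega⟩
      · rintro ⟨i, hi, rfl⟩; exact ⟨k - i, by omega, by omega⟩
    have h2 : (Finset.range (k-g)).image (fun i => 2*k - 2*i - (2*j + 1)) =
        (Finset.range (k-g)).image (fun i => 2*((g-j)+i)+1) := by
      ext x
      simp only [Finset.mem_image, Finset.mem_range]
      constructor
      · rintro ⟨i, hi, rfl⟩; exact ⟨k - g - 1 - i, by omega, by omega⟩
      · rintro ⟨i, hi, rfl⟩; exact ⟨k - g - 1 - i, by omega, by omega⟩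
    rw [h1, h2, key k (g-j) (k-g) (by omega)]
    have : k + (k-g) + 1 = 2*k - g + 1 := by omega
    rw [this]
  intro i hi
  rw [hZero, hInf, getD_map_range _ _ _ (by omega), getD_map_range _ _ _ (by omega)]
  unfold Fform
  split_ifs <;> omega
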